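/- Under the heterogeneous elasticity model with the stated integrability, fix φ ≠ 0 and write ε₀ = E[ε], ε̃ = ε − ε₀. Then for every x > 0 the wedge between the power-mean elasticity and the geometric-mean elasticity is the tilted mean of ε̃: ε_φ(x) − ε₀ = E[ exp(φ·a) · x^{φ·ε̃} · ε̃ ] / E[ exp(φ·a) · x^{φ·ε̃} ]. In particular for φ = 1, ε_1(x) − ε₀ = E[ exp(a) · x^{ε̃} · ε̃ ] / E[ exp(a) · x^{ε̃} ]. -/

import Mathlib

open MeasureTheory Real

/-- Potential outcome `Y(x)(ω) = exp (a ω + ε ω · log x)`. -/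
noncomputable def Ypot {Ω : Type*} (a e : Ω → ℝ) (x : ℝ) (ω : Ω) : ℝ :=
  Real.exp (a ω + e ω * Real.log x)

/-- The power mean `M_φ(x) = (E[Y(x)^φ])^{1/φ}` (for `φ ≠ 0`). -/
noncomputable def Mpow {Ω : Type*} [MeasurableSpace Ω] (μ : Measure Ω)
    (a e : Ω → ℝ) (φ x : ℝ) : ℝ :=
  (∫ ω, Ypot a e x ω ^ φ ∂μ) ^ (1 / φ)

/-- The power-mean elasticity `ε_φ(x) = d (log M_φ(x)) / d (log x)`. -/
noncomputable def elasPow {Ω : Type*} [MeasurableSpace Ω] (μ : Measure Ω)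
    (a e : Ω → ℝ) (φ x : ℝ) : ℝ :=
  deriv (fun t : ℝ => Real.log (Mpow μ a e φ (Real.exp t))) (Real.log x)

lemma stmt3_aux {Ω : Type*} [MeasurableSpace Ω] (μ : Measure Ω) [IsProbabilityMeasure μ]
    (a e : Ω → ℝ) (ha : Measurable a) (he : Measurable e)
    (φ : ℝ) (hφ : φ ≠ 0)
    (hM : ∀ t : ℝ, Integrable (fun ω => (1 + e ω ^ 2) * Real.exp (φ * a ω + t * φ * e ω)) μ)
    (x : ℝ) (hx : 0 < x) :
    elasPow μ a e φ x - (∫ ω, e ω ∂μ)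
      = (∫ ω, Real.exp (φ * a ω) * x ^ (φ * (e ω - ∫ ω', e ω' ∂μ))
            * (e ω - ∫ ω', e ω' ∂μ) ∂μ)
        / (∫ ω, Real.exp (φ * a ω) * x ^ (φ * (e ω - ∫ ω', e ω' ∂μ)) ∂μ) := by
  set ε₀ : ℝ := ∫ ω, e ω ∂μ with hε₀def
  set t₀ : ℝ := Real.log x with ht₀def
  -- measurability
  have hmExp : ∀ t : ℝ, Measurable (fun ω => Real.exp (φ * a ω + φ * e ω * t)) :=
    fun t => ((ha.const_mul φ).add ((he.const_mul φ).mul_const t)).exp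
  -- integrability of exp(φa + φe t)
  have hMexp : ∀ t : ℝ, Integrable (fun ω => Real.exp (φ * a ω + φ * e ω * t)) μ := by
    intro t
    refine (hM t).mono (hmExp t).aestronglyMeasurable ?_
    filter_upwards with ω
    have h1 : φ * e ω * t = t * φ * e ω := by ring
    rw [Real.norm_eq_abs, Real.norm_eq_abs, Real.abs_exp, h1,
      abs_of_nonneg (by positivity : (0:ℝ) ≤ (1 + e ω ^ 2) * Real.exp (φ * a ω + t * φ * e ω))]
    nlinarith [Real.exp_pos (φ * a ω + t * φ * e ω), sq_nonneg (e ω)]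
  -- integrability of e · exp(φa + φe t)
  have hMeexp : ∀ t : ℝ, Integrable (fun ω => e ω * Real.exp (φ * a ω + φ * e ω * t)) μ := by
    intro t
    refine (hM t).mono (he.mul (hmExp t)).aestronglyMeasurable ?_
    filter_upwards with ω
    have h1 : φ * e ω * t = t * φ * e ω := by ring
    have he2 : |e ω| ≤ 1 + e ω ^ 2 := by nlinarith [sq_abs (e ω), sq_nonneg (|e ω| - 1)]
    rw [Real.norm_eq_abs, Real.norm_eq_abs, abs_mul, Real.abs_exp, h1,
      abs_of_nonneg (by positivity : (0:ℝ) ≤ (1 + e ω ^ 2) * Real.exp (φ * a ω + t * φ * e ω))]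
    exact mul_le_mul_of_nonneg_right he2 (Real.exp_pos _).le
  set G : ℝ → ℝ := fun t => ∫ ω, Real.exp (φ * a ω + φ * e ω * t) ∂μ with hGdef
  have hGpos : ∀ t, 0 < G t := fun t => integral_exp_pos (hMexp t)
  -- derivative of G
  have hG : ∀ t₁ : ℝ,
      HasDerivAt G (∫ ω, φ * e ω * Real.exp (φ * a ω + φ * e ω * t₁) ∂μ) t₁ := by
    intro t₁
    have key := hasDerivAt_integral_of_dominated_loc_of_deriv_le
      (F := fun t ω => Real.exp (φ * a ω + φ * e ω * t))
      (F' := fun t ω => φ * e ω * Real.exp (φ * a ω + φ * e ω * t))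
      (bound := fun ω => |φ| * ((1 + e ω ^ 2) * Real.exp (φ * a ω + (t₁ - 1) * φ * e ω)
        + (1 + e ω ^ 2) * Real.exp (φ * a ω + (t₁ + 1) * φ * e ω)))
      (μ := μ) (x₀ := t₁) (Metric.ball_mem_nhds t₁ one_pos)
      (Filter.Eventually.of_forall fun t => (hmExp t).aestronglyMeasurable)
      (hMexp t₁)
      (((he.const_mul φ).mul (hmExp t₁)).aestronglyMeasurable)
      ?_ (((hM (t₁ - 1)).add (hM (t₁ + 1))).const_mul |φ|) ?_
    · exact key.2
    · filter_upwards with ω t ht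
      have habs : |t - t₁| < 1 := by rwa [Metric.mem_ball, Real.dist_eq] at ht
      have h1 := abs_lt.1 habs
      have he2 : |e ω| ≤ 1 + e ω ^ 2 := by nlinarith [sq_abs (e ω), sq_nonneg (|e ω| - 1)]
      have hkey : Real.exp (φ * a ω + φ * e ω * t)
          ≤ Real.exp (φ * a ω + (t₁ - 1) * φ * e ω) + Real.exp (φ * a ω + (t₁ + 1) * φ * e ω) := by
        rcases le_or_gt 0 (φ * e ω) with h | h
        · refine le_add_of_nonneg_left (Real.exp_pos _).le |>.trans' ?_
          exact Real.exp_le_exp.2 (by nlinarith)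
        · refine le_add_of_nonneg_right (Real.exp_pos _).le |>.trans' ?_
          exact Real.exp_le_exp.2 (by nlinarith)
      rw [Real.norm_eq_abs, abs_mul, abs_mul, Real.abs_exp]
      have h2 : |e ω| * Real.exp (φ * a ω + φ * e ω * t)
          ≤ (1 + e ω ^ 2) * (Real.exp (φ * a ω + (t₁ - 1) * φ * e ω)
            + Real.exp (φ * a ω + (t₁ + 1) * φ * e ω)) :=
        mul_le_mul he2 hkey (Real.exp_pos _).le (by positivity)
      calc |φ| * |e ω| * Real.exp (φ * a ω + φ * e ω * t)
          = |φ| * (|e ω| * Real.exp (φ * a ω + φ * e ω * t)) := by ring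
        _ ≤ |φ| * ((1 + e ω ^ 2) * (Real.exp (φ * a ω + (t₁ - 1) * φ * e ω)
            + Real.exp (φ * a ω + (t₁ + 1) * φ * e ω))) :=
            mul_le_mul_of_nonneg_left h2 (abs_nonneg φ)
        _ = |φ| * ((1 + e ω ^ 2) * Real.exp (φ * a ω + (t₁ - 1) * φ * e ω)
            + (1 + e ω ^ 2) * Real.exp (φ * a ω + (t₁ + 1) * φ * e ω)) := by ring
    · filter_upwards with ω t _
      have hlin : HasDerivAt (fun s : ℝ => φ * a ω + φ * e ω * s) (φ * e ω) t := by
        simpa using ((hasDerivAt_id t).const_mul (φ * e ω)).const_add (φ * a ω)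
      have := hlin.exp
      exact this.congr_deriv (by ring)
  -- rewrite Mpow
  have hMp : ∀ t : ℝ, Real.log (Mpow μ a e φ (Real.exp t)) = (1 / φ) * Real.log (G t) := by
    intro t
    have h1 : (fun ω => Ypot a e (Real.exp t) ω ^ φ)
        = fun ω => Real.exp (φ * a ω + φ * e ω * t) := by
      funext ω
      rw [Ypot, Real.log_exp, Real.rpow_def_of_pos (Real.exp_pos _), Real.log_exp]
      congr 1
      ring
    rw [Mpow, h1]
    exact Real.log_rpow (hGpos t) _
  -- compute the elasticity
  have hElas : elasPow μ a e φ x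
      = (∫ ω, e ω * Real.exp (φ * a ω + φ * e ω * t₀) ∂μ) / G t₀ := by
    have hfun : (fun t : ℝ => Real.log (Mpow μ a e φ (Real.exp t)))
        = fun t => (1 / φ) * Real.log (G t) := funext hMp
    rw [elasPow, hfun, ← ht₀def]
    have hd : HasDerivAt (fun t => (1 / φ) * Real.log (G t))
        ((1 / φ) * ((∫ ω, φ * e ω * Real.exp (φ * a ω + φ * e ω * t₀) ∂μ) / G t₀)) t₀ :=
      ((hG t₀).log (hGpos t₀).ne').const_mul (1 / φ)
    rw [hd.deriv]
    rw [show (fun ω => φ * e ω * Real.exp (φ * a ω + φ * e ω * t₀))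
        = fun ω => φ * (e ω * Real.exp (φ * a ω + φ * e ω * t₀)) from
        funext fun ω => by ring, integral_const_mul]
    field_simp
    congr 1
    congr 1
    funext ω
    ring
  -- rewrite the numerator
  have hconst : ∀ ω, Real.exp (φ * a ω) * x ^ (φ * (e ω - ε₀))
      = Real.exp (-(φ * ε₀ * t₀)) * Real.exp (φ * a ω + φ * e ω * t₀) := by
    intro ω
    rw [Real.rpow_def_of_pos hx, ← ht₀def, ← Real.exp_add, ← Real.exp_add]
    congr 1
    ring
  have hnum : (∫ ω, Real.exp (φ * a ω) * x ^ (φ * (e ω - ε₀)) * (e ω - ε₀) ∂μ)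
      = Real.exp (-(φ * ε₀ * t₀))
        * ∫ ω, (e ω - ε₀) * Real.exp (φ * a ω + φ * e ω * t₀) ∂μ := by
    rw [← integral_const_mul]
    congr 1
    funext ω
    have := hconst ω
    linear_combination (e ω - ε₀) * this
  have hden : (∫ ω, Real.exp (φ * a ω) * x ^ (φ * (e ω - ε₀)) ∂μ)
      = Real.exp (-(φ * ε₀ * t₀)) * G t₀ := by
    rw [hGdef, ← integral_const_mul]
    exact integral_congr_ae (Filter.Eventually.of_forall fun ω => hconst ω)
  have hN' : (∫ ω, (e ω - ε₀) * Real.exp (φ * a ω + φ * e ω * t₀) ∂μ)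
      = (∫ ω, e ω * Real.exp (φ * a ω + φ * e ω * t₀) ∂μ) - ε₀ * G t₀ := by
    rw [show (fun ω => (e ω - ε₀) * Real.exp (φ * a ω + φ * e ω * t₀))
        = fun ω => e ω * Real.exp (φ * a ω + φ * e ω * t₀)
          - ε₀ * Real.exp (φ * a ω + φ * e ω * t₀) from funext fun ω => by ring]
    rw [integral_sub (hMeexp t₀) ((hMexp t₀).const_mul ε₀), integral_const_mul]
  rw [hElas, hnum, hden, mul_div_mul_left _ _ (Real.exp_ne_zero _), hN']
  rw [sub_div, mul_div_assoc, div_self (hGpos t₀).ne', mul_one]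

theorem stmt3
    {Ω : Type*} [MeasurableSpace Ω] (μ : Measure Ω) [IsProbabilityMeasure μ]
    (a e : Ω → ℝ) (ha : Measurable a) (he : Measurable e)
    (hInta : Integrable a μ) (hInte : Integrable e μ)
    (φ : ℝ) (hφ : φ ≠ 0)
    (hMom : ∀ t : ℝ, Integrable (fun ω => (1 + e ω ^ 2) * Real.exp (φ * a ω + t * φ * e ω)) μ)
    (hMom1 : ∀ t : ℝ, Integrable (fun ω => (1 + e ω ^ 2) * Real.exp (1 * a ω + t * 1 * e ω)) μ)
    (x : ℝ) (hx : 0 < x) :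
    elasPow μ a e φ x - (∫ ω, e ω ∂μ)
      = (∫ ω, Real.exp (φ * a ω) * x ^ (φ * (e ω - ∫ ω', e ω' ∂μ))
            * (e ω - ∫ ω', e ω' ∂μ) ∂μ)
        / (∫ ω, Real.exp (φ * a ω) * x ^ (φ * (e ω - ∫ ω', e ω' ∂μ)) ∂μ)
    ∧ elasPow μ a e 1 x - (∫ ω, e ω ∂μ)
      = (∫ ω, Real.exp (a ω) * x ^ (e ω - ∫ ω', e ω' ∂μ)
            * (e ω - ∫ ω', e ω' ∂μ) ∂μ)
        / (∫ ω, Real.exp (a ω) * x ^ (e ω - ∫ ω', e ω' ∂μ) ∂μ) := by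
  refine ⟨stmt3_aux μ a e ha he φ hφ hMom x hx, ?_⟩
  have h := stmt3_aux μ a e ha he 1 one_ne_zero hMom1 x hx
  simpa using h
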